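/- If f : ℝ → ℝ is nonnegative and differentiable with H-Lipschitz derivative, then for all t, r ∈ ℝ, (f(t) - f(r))² ≤ 6 H (f(t) + f(r)) (t - r)². -/

import Mathlib

private lemma descent_aux (f f' : ℝ → ℝ) (H : ℝ) (hH : 0 ≤ H)
    (hderiv : ∀ t, HasDerivAt f (f' t) t)
    (hlip : ∀ t s, |f' t - f' s| ≤ H * |t - s|) :
    ∀ x y, f y ≤ f x + f' x * (y - x) + H * (y - x) ^ 2 := by
  intro x y
  rcases lt_trichotomy x y with h | h | h
  · obtain ⟨c, hc, hc'⟩ := exists_hasDerivAt_eq_slope f f' h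
      (fun z _ => (hderiv z).continuousAt.continuousWithinAt) (fun z _ => hderiv z)
    have hyx : (0:ℝ) < y - x := sub_pos.mpr h
    have hslope : f y - f x = f' c * (y - x) := by
      rw [hc']; field_simp
    have h1 := abs_le.mp (hlip c x)
    rw [abs_of_pos (by linarith [hc.1] : (0:ℝ) < c - x)] at h1
    have e2 : H * (c - x) ≤ H * (y - x) :=
      mul_le_mul_of_nonneg_left (by linarith [hc.2]) hH
    have e1 : (f' c - f' x) * (y - x) ≤ (H * (y - x)) * (y - x) :=
      mul_le_mul_of_nonneg_right (h1.2.trans e2) hyx.le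
    nlinarith [hslope, e1]
  · subst h; nlinarith
  · obtain ⟨c, hc, hc'⟩ := exists_hasDerivAt_eq_slope f f' h
      (fun z _ => (hderiv z).continuousAt.continuousWithinAt) (fun z _ => hderiv z)
    have hxy : (0:ℝ) < x - y := sub_pos.mpr h
    have hslope : f x - f y = f' c * (x - y) := by
      rw [hc']; field_simp
    have h1 := abs_le.mp (hlip c x)
    rw [abs_of_neg (by linarith [hc.2] : (c - x) < 0)] at h1
    have e0 : f' x - f' c ≤ H * (x - c) := by
      have := h1.1; nlinarith
    have e2 : H * (x - c) ≤ H * (x - y) :=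
      mul_le_mul_of_nonneg_left (by linarith [hc.1]) hH
    have e1 : (f' x - f' c) * (x - y) ≤ (H * (x - y)) * (x - y) :=
      mul_le_mul_of_nonneg_right (e0.trans e2) hxy.le
    nlinarith [hslope, e1]

private lemma grad_aux (f f' : ℝ → ℝ) (H : ℝ) (hH : 0 < H)
    (hderiv : ∀ t, HasDerivAt f (f' t) t)
    (hnn : ∀ t, 0 ≤ f t)
    (hlip : ∀ t s, |f' t - f' s| ≤ H * |t - s|) :
    ∀ x, (f' x) ^ 2 ≤ 4 * H * f x := by
  intro x
  have hd := descent_aux f f' H hH.le hderiv hlip x (x - f' x / (2 * H))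
  have h0 := hnn (x - f' x / (2 * H))
  have he : x - f' x / (2 * H) - x = -(f' x / (2 * H)) := by ring
  rw [he] at hd
  have h2 : f' x * -(f' x / (2 * H)) = -(f' x ^ 2) / (2 * H) := by ring
  have h3 : H * (-(f' x / (2 * H))) ^ 2 = f' x ^ 2 / (4 * H) := by
    field_simp; ring
  rw [h2, h3] at hd
  have hq : -(f' x ^ 2) / (2 * H) + f' x ^ 2 / (4 * H) = -(f' x ^ 2 / (4 * H)) := by
    field_simp; ring
  have hd2 : f' x ^ 2 / (4 * H) ≤ f x := by linarith [hd, h0, hq]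
  rw [div_le_iff₀ (by positivity : (0:ℝ) < 4 * H)] at hd2
  linarith

private lemma sqrt_lip (f f' : ℝ → ℝ) (H : ℝ) (hH : 0 < H)
    (hderiv : ∀ t, HasDerivAt f (f' t) t)
    (hnn : ∀ t, 0 ≤ f t)
    (hlip : ∀ t s, |f' t - f' s| ≤ H * |t - s|) :
    ∀ x y, Real.sqrt (f x) ≤ Real.sqrt (f y) + Real.sqrt H * |x - y| := by
  intro x y
  set d := |x - y| with hdd
  have hdnn : 0 ≤ d := abs_nonneg _
  have hgrad := grad_aux f f' H hH hderiv hnn hlip y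
  have habs : |f' y| ≤ 2 * Real.sqrt H * Real.sqrt (f y) := by
    have h1 : |f' y| = Real.sqrt ((f' y) ^ 2) := (Real.sqrt_sq_eq_abs _).symm
    rw [h1]
    have h2 : (2 * Real.sqrt H * Real.sqrt (f y)) ^ 2 = 4 * H * f y := by
      have := Real.sq_sqrt hH.le
      have := Real.sq_sqrt (hnn y)
      nlinarith
    rw [show (4:ℝ) * H * f y = (2 * Real.sqrt H * Real.sqrt (f y)) ^ 2 from h2.symm]
      at hgrad
    calc Real.sqrt ((f' y) ^ 2)
        ≤ Real.sqrt ((2 * Real.sqrt H * Real.sqrt (f y)) ^ 2) :=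
          Real.sqrt_le_sqrt hgrad
      _ = |2 * Real.sqrt H * Real.sqrt (f y)| := Real.sqrt_sq_eq_abs _
      _ = 2 * Real.sqrt H * Real.sqrt (f y) := abs_of_nonneg (by positivity)
  have key : f x ≤ (Real.sqrt (f y) + Real.sqrt H * d) ^ 2 := by
    have hd := descent_aux f f' H hH.le hderiv hlip y x
    have h1 : f' y * (x - y) ≤ |f' y| * d := by
      calc f' y * (x - y) ≤ |f' y * (x - y)| := le_abs_self _
        _ = |f' y| * d := by rw [abs_mul]
    have hsH := Real.sq_sqrt hH.le
    have hsf := Real.sq_sqrt (hnn y)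
    have habs2 : d ^ 2 = (x - y) ^ 2 := sq_abs _
    nlinarith [mul_le_mul_of_nonneg_right habs hdnn,
      Real.sqrt_nonneg H, Real.sqrt_nonneg (f y)]
  calc Real.sqrt (f x) ≤ Real.sqrt ((Real.sqrt (f y) + Real.sqrt H * d) ^ 2) :=
        Real.sqrt_le_sqrt key
    _ = Real.sqrt (f y) + Real.sqrt H * d := by
        rw [Real.sqrt_sq (by positivity)]

private lemma main_aux (f f' : ℝ → ℝ) (H : ℝ) (hH : 0 < H)
    (hderiv : ∀ t, HasDerivAt f (f' t) t)
    (hnn : ∀ t, 0 ≤ f t)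
    (hlip : ∀ t s, |f' t - f' s| ≤ H * |t - s|) :
    ∀ t r, (f t - f r) ^ 2 ≤ 6 * H * (f t + f r) * (t - r) ^ 2 := by
  intro t r
  have h1 := sqrt_lip f f' H hH hderiv hnn hlip t r
  have h2 := sqrt_lip f f' H hH hderiv hnn hlip r t
  rw [abs_sub_comm] at h2
  set a := Real.sqrt (f t) with ha
  set b := Real.sqrt (f r) with hb
  set L := Real.sqrt H * |t - r| with hL
  have hLnn : 0 ≤ L := by positivity
  have hft : f t = a ^ 2 := (Real.sq_sqrt (hnn t)).symm
  have hfr : f r = b ^ 2 := (Real.sq_sqrt (hnn r)).symm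
  have hL2 : L ^ 2 = H * (t - r) ^ 2 := by
    rw [hL, mul_pow, Real.sq_sqrt hH.le, sq_abs]
  have hanb : 0 ≤ a := Real.sqrt_nonneg _
  have hbnb : 0 ≤ b := Real.sqrt_nonneg _
  have hab : (a - b) ^ 2 ≤ L ^ 2 := by nlinarith
  have hsum : (a + b) ^ 2 ≤ 2 * (a ^ 2 + b ^ 2) := by nlinarith [sq_nonneg (a - b)]
  have hmul : (a - b) ^ 2 * (a + b) ^ 2 ≤ L ^ 2 * (2 * (a ^ 2 + b ^ 2)) :=
    mul_le_mul hab hsum (sq_nonneg _) (sq_nonneg _)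
  rw [hft, hfr]
  nlinarith [hmul, hL2, mul_nonneg (mul_nonneg hH.le
    (by positivity : (0:ℝ) ≤ a ^ 2 + b ^ 2)) (sq_nonneg (t - r))]

theorem smooth_squared_difference_bound
    (f f' : ℝ → ℝ) (H : ℝ) (hH : 0 ≤ H)
    (hderiv : ∀ t, HasDerivAt f (f' t) t)
    (hnn : ∀ t, 0 ≤ f t)
    (hlip : ∀ t s, |f' t - f' s| ≤ H * |t - s|) :
    ∀ t r, (f t - f r) ^ 2 ≤ 6 * H * (f t + f r) * (t - r) ^ 2 := by
  rcases hH.lt_or_eq with hpos | hzero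
  · exact main_aux f f' H hpos hderiv hnn hlip
  · intro t r
    have hkey : ∀ ε : ℝ, 0 < ε → (f t - f r) ^ 2 ≤ 6 * ε * (f t + f r) * (t - r) ^ 2 := by
      intro ε hε
      have hlip' : ∀ a b, |f' a - f' b| ≤ ε * |a - b| := by
        intro a b
        calc |f' a - f' b| ≤ H * |a - b| := hlip a b
          _ ≤ ε * |a - b| := by
            rw [← hzero, zero_mul]; positivity
      exact main_aux f f' ε hε hderiv hnn hlip' t r
    set S := (f t - f r) ^ 2 with hS
    set C := 6 * (f t + f r) * (t - r) ^ 2 with hC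
    have hCnn : 0 ≤ C := by
      have h1 := hnn t; have h2 := hnn r
      exact mul_nonneg (by nlinarith) (sq_nonneg _)
    have h0 : S ≤ 0 := by
      by_contra hcon
      push_neg at hcon
      have hε : 0 < S / (2 * (C + 1)) := div_pos hcon (by linarith)
      have hk := hkey _ hε
      have heq : 6 * (S / (2 * (C + 1))) * (f t + f r) * (t - r) ^ 2
          = S * C / (2 * (C + 1)) := by
        rw [hC]; field_simp
      rw [heq, le_div_iff₀ (by linarith : (0:ℝ) < 2 * (C + 1))] at hk
      nlinarith [mul_nonneg hCnn hcon.le]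
    rw [← hzero]
    nlinarith [sq_nonneg (f t - f r)]
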